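/- Similarly, with δ_m^- = (1/(1-q^{-2m}))(λ_Λ - q^{-m} ρ_Λ) + (1/(1+q^{-m}))(abcd/q + 1) Id, one has δ_m^-(E^m) = q^{-γ} E^m, and moreover δ_m^- = (abcd/q) δ_{-m}^+. -/

import Mathlib

/-- `δ_m⁻(E^m) = q^{-γ} E^m`, and `δ_m⁻ = (abcd/q) δ_{-m}⁺` as linear maps on
operators, where
`δ_m⁻ = (1/(1-q^{-2m}))(λ_Λ - q^{-m} ρ_Λ) + (1/(1+q^{-m}))(abcd/q + 1) Id`. -/
theorem delta_minus_on_shift_and_relation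
    (q : ℝ) (hq : 0 < q) (hq1 : q < 1)
    (a b c d : ℂ) (habcd : a * b * c * d ≠ 0)
    (m : ℕ) (hm : 1 ≤ m)
    (Λ : ℤ → ℂ)
    (hΛ : ∀ γ : ℤ, Λ γ = (q:ℂ)^(-γ) * (1 - (q:ℂ)^γ) * (1 - a*b*c*d*(q:ℂ)^(γ-1))) :
    (∀ (h : ℤ → ℂ) (γ : ℤ),
      (1 / (1 - (q:ℂ)^(-(2*(m:ℤ))))) *
          (Λ γ * h (γ + m) - (q:ℂ)^(-(m:ℤ)) * (Λ (γ + m) * h (γ + m)))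
        + (1 / (1 + (q:ℂ)^(-(m:ℤ)))) * (a*b*c*d/(q:ℂ) + 1) * h (γ + m)
      = (q:ℂ)^(-γ) * h (γ + m)) ∧
    (∀ (T : (ℤ → ℂ) → (ℤ → ℂ)) (h : ℤ → ℂ) (γ : ℤ),
      (1 / (1 - (q:ℂ)^(-(2*(m:ℤ))))) *
          (Λ γ * T h γ - (q:ℂ)^(-(m:ℤ)) * T (fun γ' => Λ γ' * h γ') γ)
        + (1 / (1 + (q:ℂ)^(-(m:ℤ)))) * (a*b*c*d/(q:ℂ) + 1) * T h γ
      = (a*b*c*d/(q:ℂ)) *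
        (((q:ℂ) / (a*b*c*d * (1 - (q:ℂ)^(-(2*(m:ℤ)))))) *
            (Λ γ * T h γ - (q:ℂ)^(-(m:ℤ)) * T (fun γ' => Λ γ' * h γ') γ)
          + (1 + (q:ℂ)/(a*b*c*d)) * (1/(1 + (q:ℂ)^(-(m:ℤ)))) * T h γ)) := by
  have hq0 : (q:ℂ) ≠ 0 := by exact_mod_cast ne_of_gt hq
  have hqm_pos : (0:ℝ) < q ^ (-(m:ℤ)) := zpow_pos hq _
  have hq2m_gt : (1:ℝ) < q ^ (-(2*(m:ℤ))) := by
    apply one_lt_zpow_of_neg₀ hq hq1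
    omega
  have cast2m : ((q:ℂ))^(-(2*(m:ℤ))) = ((q ^ (-(2*(m:ℤ))) : ℝ) : ℂ) :=
    (Complex.ofReal_zpow q _).symm
  have castm : ((q:ℂ))^(-(m:ℤ)) = ((q ^ (-(m:ℤ)) : ℝ) : ℂ) :=
    (Complex.ofReal_zpow q _).symm
  have hden1 : (1 - (q:ℂ)^(-(2*(m:ℤ)))) ≠ 0 := by
    rw [cast2m]
    intro hcon
    have h1 : ((q ^ (-(2*(m:ℤ))) : ℝ) : ℂ) = ((1:ℝ):ℂ) := by
      push_cast at hcon ⊢; linear_combination -hcon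
    have := Complex.ofReal_inj.mp h1
    linarith
  have hden2 : (1 + (q:ℂ)^(-(m:ℤ))) ≠ 0 := by
    rw [castm]
    intro hcon
    have h1 : ((q ^ (-(m:ℤ)) : ℝ) : ℂ) = ((-1:ℝ):ℂ) := by
      push_cast at hcon ⊢; linear_combination hcon
    have := Complex.ofReal_inj.mp h1
    linarith
  constructor
  · intro h γ
    rw [hΛ γ, hΛ (γ + m)]
    have e1 : (q:ℂ)^(-(γ + (m:ℤ))) = ((q:ℂ)^γ)⁻¹ * (q:ℂ)^(-(m:ℤ)) := by
      rw [← zpow_neg, ← zpow_add₀ hq0]; congr 1; ring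
    have e2 : (q:ℂ)^(γ + (m:ℤ)) = (q:ℂ)^γ * ((q:ℂ)^(-(m:ℤ)))⁻¹ := by
      rw [← zpow_neg, neg_neg, ← zpow_add₀ hq0]
    have e3 : (q:ℂ)^(γ + (m:ℤ) - 1) = (q:ℂ)^γ / (q:ℂ) * ((q:ℂ)^(-(m:ℤ)))⁻¹ := by
      rw [div_eq_mul_inv, ← zpow_neg_one, ← zpow_neg, neg_neg,
        ← zpow_add₀ hq0, ← zpow_add₀ hq0]; congr 1; ring
    have e4 : (q:ℂ)^(-(2*(m:ℤ))) = (q:ℂ)^(-(m:ℤ)) * (q:ℂ)^(-(m:ℤ)) := by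
      rw [← zpow_add₀ hq0]; congr 1; ring
    have e5 : (q:ℂ)^(-γ) = ((q:ℂ)^γ)⁻¹ := zpow_neg _ _
    have e6 : (q:ℂ)^(γ-1) = (q:ℂ)^γ / (q:ℂ) := by
      rw [div_eq_mul_inv, ← zpow_neg_one, ← zpow_add₀ hq0, sub_eq_add_neg]
    have hX : (q:ℂ)^γ ≠ 0 := zpow_ne_zero _ hq0
    have hu : (q:ℂ)^(-(m:ℤ)) ≠ 0 := zpow_ne_zero _ hq0
    rw [e4] at hden1 ⊢
    rw [e1, e2, e3, e5, e6]
    set X := (q:ℂ)^γ with hXdef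
    set u := (q:ℂ)^(-(m:ℤ)) with hudef
    have key : X⁻¹*(1-X)*(1 - a*b*c*d*(X/(q:ℂ)))
        - u * ((X⁻¹*u)*(1 - X*u⁻¹)*(1 - a*b*c*d*(X/(q:ℂ)*u⁻¹)))
        = X⁻¹*(1-u*u) - (1-u)*(1+a*b*c*d/(q:ℂ)) := by
      field_simp
      ring
    have key2 : (1/(1-u*u)) * (X⁻¹*(1-u*u) - (1-u)*(1+a*b*c*d/(q:ℂ)))
        + (1/(1+u))*(a*b*c*d/(q:ℂ)+1) = X⁻¹ := by
      have hden1' : (1:ℂ) - u^2 ≠ 0 := by rw [sq]; exact hden1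
      field_simp
      ring
    linear_combination (1/(1-u*u)) * h (γ+(m:ℤ)) * key + h (γ+(m:ℤ)) * key2
  · intro T h γ
    set u2 := (q:ℂ)^(-(2*(m:ℤ))) with hu2
    set u := (q:ℂ)^(-(m:ℤ)) with hu
    set A := T h γ with hA
    set B := T (fun γ' => Λ γ' * h γ') γ with hB
    have hr1 : (a*b*c*d/(q:ℂ)) * ((q:ℂ)/(a*b*c*d*(1-u2))) = 1/(1-u2) := by
      rw [div_mul_div_comm,
        div_eq_div_iff (mul_ne_zero hq0 (mul_ne_zero habcd hden1)) hden1]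
      ring
    have hsc : (a*b*c*d/(q:ℂ))*(1+(q:ℂ)/(a*b*c*d)) = a*b*c*d/(q:ℂ)+1 := by
      rw [mul_add, mul_one, div_mul_div_comm, mul_comm (q:ℂ) (a*b*c*d),
        div_self (mul_ne_zero habcd hq0)]
    linear_combination -(Λ γ * A - u * B) * hr1 - A * (1/(1+u)) * hsc
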